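/- Let k be a field and f, g ∈ k[Y] monic polynomials. If h(T) = (-1)^(deg g) · Res_Y(g(Y), f(Y) - T) is irreducible in k[T], then g is irreducible in k[Y]. -/

import Mathlib

open Polynomial

/-- The resultant of two polynomials, defined as the determinant of the Sylvester
matrix: the first `g.natDegree` rows contain the shifted coefficient sequences of `f`,
the remaining `f.natDegree` rows the shifted coefficient sequences of `g`. -/
noncomputable def resultant {R : Type*} [CommRing R] (f g : R[X]) : R :=
  Matrix.det (Matrix.of fun (i j : Fin (f.natDegree + g.natDegree)) =>
    if (i : ℕ) < g.natDegree then
      if (i : ℕ) ≤ (j : ℕ) ∧ (j : ℕ) ≤ (i : ℕ) + f.natDegree then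
        f.coeff (f.natDegree + i - j) else 0
    else
      if (i : ℕ) - g.natDegree ≤ (j : ℕ) ∧ (j : ℕ) ≤ (i : ℕ) - g.natDegree + g.natDegree then
        g.coeff (g.natDegree + ((i : ℕ) - g.natDegree) - (j : ℕ)) else 0)


lemma rowsum {S : Type*} [CommRing S] (p : S[X]) (a N : ℕ) (h : a + p.natDegree + 1 ≤ N) :
    ∑ j ∈ Finset.range N,
      (if a ≤ j ∧ j ≤ a + p.natDegree then C (p.coeff (p.natDegree + a - j)) else 0) * X ^ (N - 1 - j)
      = X ^ (N - 1 - a - p.natDegree) * p := by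
  set D := p.natDegree with hD
  have h1 : ∑ j ∈ Finset.range N,
      (if a ≤ j ∧ j ≤ a + D then C (p.coeff (D + a - j)) else 0) * X ^ (N - 1 - j)
      = ∑ j ∈ (Finset.range N).filter (fun j => a ≤ j ∧ j ≤ a + D),
        C (p.coeff (D + a - j)) * X ^ (N - 1 - j) := by
    rw [Finset.sum_filter]
    exact Finset.sum_congr rfl fun j _ => by split <;> simp
  rw [h1]
  have h2 : (Finset.range N).filter (fun j => a ≤ j ∧ j ≤ a + D) = Finset.Icc a (a + D) := by
    ext j; simp only [Finset.mem_filter, Finset.mem_range, Finset.mem_Icc]; omega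
  rw [h2]
  have h3 : ∑ j ∈ Finset.Icc a (a + D), C (p.coeff (D + a - j)) * X ^ (N - 1 - j)
      = ∑ d ∈ Finset.range (D + 1), C (p.coeff (D - d)) * X ^ ((N - 1 - a - D) + (D - d)) := by
    refine Finset.sum_bij' (fun j _ => j - a) (fun d _ => a + d) ?_ ?_ ?_ ?_ ?_
    all_goals intro x hx
    all_goals simp only [Finset.mem_Icc, Finset.mem_range] at hx ⊢
    all_goals try omega
    have e1 : D + a - x = D - (x - a) := by omega
    have e2 : N - 1 - x = N - 1 - a - D + (D - (x - a)) := by omega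
    rw [e1, e2]
  rw [h3]
  have h4 := Finset.sum_range_reflect (fun d => C (p.coeff d) * X ^ ((N - 1 - a - D) + d)) (D + 1)
  simp only [Nat.add_sub_cancel] at h4
  rw [h4]
  conv_rhs => rw [p.as_sum_range_C_mul_X_pow]
  rw [Finset.mul_sum]
  exact Finset.sum_congr rfl fun d _ => by rw [pow_add]; ring

lemma resultant_mem_span {R : Type*} [CommRing R] (f g : R[X])
    (hN : 0 < f.natDegree + g.natDegree) :
    C (_root_.resultant f g) ∈ Ideal.span {f, g} := by
  set N := f.natDegree + g.natDegree with hNdef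
  set S : Matrix (Fin N) (Fin N) R := Matrix.of fun (i j : Fin N) =>
    if (i : ℕ) < g.natDegree then
      if (i : ℕ) ≤ (j : ℕ) ∧ (j : ℕ) ≤ (i : ℕ) + f.natDegree then
        f.coeff (f.natDegree + i - j) else 0
    else
      if (i : ℕ) - g.natDegree ≤ (j : ℕ) ∧ (j : ℕ) ≤ (i : ℕ) - g.natDegree + g.natDegree then
        g.coeff (g.natDegree + ((i : ℕ) - g.natDegree) - (j : ℕ)) else 0 with hS
  set vv : Fin N → R[X] := fun j => X ^ (N - 1 - (j : ℕ)) with hvv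
  have key : ∀ i : Fin N, ((S.map C).mulVec vv) i ∈ Ideal.span ({f, g} : Set R[X]) := by
    intro i
    have hmv : (S.map C).mulVec vv i = ∑ j : Fin N, C (S i j) * vv j := by
      simp [Matrix.mulVec, dotProduct, Matrix.map_apply]
    rw [hmv]
    by_cases hi : (i : ℕ) < g.natDegree
    · have hsum : ∑ j : Fin N, C (S i j) * vv j
          = ∑ j ∈ Finset.range N,
            (if (i : ℕ) ≤ j ∧ j ≤ (i : ℕ) + f.natDegree then
              C (f.coeff (f.natDegree + (i : ℕ) - j)) else 0) * X ^ (N - 1 - j) := by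
        rw [← Fin.sum_univ_eq_sum_range (fun j => (if (i : ℕ) ≤ j ∧ j ≤ (i : ℕ) + f.natDegree then
              C (f.coeff (f.natDegree + (i : ℕ) - j)) else 0) * X ^ (N - 1 - j)) N]
        refine Finset.sum_congr rfl fun j _ => ?_
        simp only [hS, Matrix.of_apply, if_pos hi, hvv]
        rw [apply_ite C, map_zero]
      rw [hsum, rowsum f i N (by omega)]
      exact Ideal.mul_mem_left _ _ (Ideal.subset_span (by simp))
    · have hsum : ∑ j : Fin N, C (S i j) * vv j
          = ∑ j ∈ Finset.range N,
            (if (i : ℕ) - g.natDegree ≤ j ∧ j ≤ ((i : ℕ) - g.natDegree) + g.natDegree then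
              C (g.coeff (g.natDegree + ((i : ℕ) - g.natDegree) - j)) else 0) * X ^ (N - 1 - j) := by
        rw [← Fin.sum_univ_eq_sum_range (fun j =>
          (if (i : ℕ) - g.natDegree ≤ j ∧ j ≤ ((i : ℕ) - g.natDegree) + g.natDegree then
              C (g.coeff (g.natDegree + ((i : ℕ) - g.natDegree) - j)) else 0) * X ^ (N - 1 - j)) N]
        refine Finset.sum_congr rfl fun j _ => ?_
        simp only [hS, Matrix.of_apply, if_neg hi, hvv]
        rw [apply_ite C, map_zero]
      have hio : (i : ℕ) - g.natDegree + g.natDegree + 1 ≤ N := by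
        have := i.isLt; omega
      rw [hsum, rowsum g ((i : ℕ) - g.natDegree) N hio]
      exact Ideal.mul_mem_left _ _ (Ideal.subset_span (by simp))
  have hlast : (⟨N - 1, by omega⟩ : Fin N) = ⟨N - 1, by omega⟩ := rfl
  set last : Fin N := ⟨N - 1, by omega⟩ with hlastdef
  have hvvlast : vv last = 1 := by
    simp [hvv, hlastdef]
  have hmain : (Matrix.adjugate (S.map C)).mulVec ((S.map C).mulVec vv)
      = (S.map C).det • vv := by
    rw [Matrix.mulVec_mulVec, Matrix.adjugate_mul, Matrix.smul_mulVec,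
      Matrix.one_mulVec]
  have hdet : (S.map C).det = C (_root_.resultant f g) := by
    rw [show _root_.resultant f g = S.det from rfl, RingHom.map_det (C : R →+* R[X]) S,
      RingHom.mapMatrix_apply]
  have heval := congrFun hmain last
  rw [Pi.smul_apply, hvvlast, smul_eq_mul, mul_one, hdet] at heval
  rw [← heval]
  have : (Matrix.adjugate (S.map C)).mulVec ((S.map C).mulVec vv) last
      = ∑ j : Fin N, (Matrix.adjugate (S.map C)) last j * ((S.map C).mulVec vv) j := by
    simp [Matrix.mulVec, dotProduct]
  rw [this]
  exact Ideal.sum_mem _ fun j _ => Ideal.mul_mem_left _ _ (key j)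

lemma neg_charmatrix {k : Type*} [CommRing k] {a : ℕ} (Q : Matrix (Fin a) (Fin a) k) :
    Q.map C - Matrix.diagonal (fun _ => (X : k[X])) = -Q.charmatrix := by
  funext i j
  by_cases hij : i = j
  · subst hij
    rw [Matrix.sub_apply, Matrix.map_apply, Matrix.diagonal_apply_eq, Matrix.neg_apply,
      Matrix.charmatrix_apply_eq]
    ring
  · rw [Matrix.sub_apply, Matrix.map_apply, Matrix.diagonal_apply_ne _ hij, Matrix.neg_apply,
      Matrix.charmatrix_apply_ne _ _ _ hij]
    ring

set_option maxHeartbeats 1000000 in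
lemma resultant_eq_charpoly {k : Type*} [Field k] (f g : k[X]) (hg : g.Monic) :
    ∃ Q : Matrix (Fin ((g.map (C : k →+* k[X])).natDegree))
        (Fin ((g.map (C : k →+* k[X])).natDegree)) k,
      _root_.resultant (g.map C) (f.map C - C X)
        = (-1 : k[X]) ^ (g.map (C : k →+* k[X])).natDegree * Q.charpoly := by
  set p : (k[X])[X] := g.map C with hp
  set q : (k[X])[X] := f.map C - C X with hq
  set a := p.natDegree with hadef
  set b := q.natDegree with hbdef
  have ha : a = g.natDegree := hg.natDegree_map C
  have hqcoeff : ∀ d, q.coeff d = C (f.coeff d) - if d = 0 then X else 0 := by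
    intro d
    simp [hq, coeff_map, coeff_C]
  set A : Matrix (Fin b) (Fin b) k := Matrix.of fun i j =>
    if (i : ℕ) ≤ (j : ℕ) ∧ (j : ℕ) ≤ (i : ℕ) + a then g.coeff (a + i - j) else 0 with hA
  set B : Matrix (Fin b) (Fin a) k := Matrix.of fun i j =>
    if (i : ℕ) ≤ b + (j : ℕ) ∧ b + (j : ℕ) ≤ (i : ℕ) + a then g.coeff (a + i - (b + j)) else 0 with hB
  set Cc : Matrix (Fin a) (Fin b) k := Matrix.of fun i j =>
    if (i : ℕ) ≤ (j : ℕ) ∧ (j : ℕ) ≤ (i : ℕ) + b then f.coeff (b + i - j) else 0 with hCc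
  set Dk : Matrix (Fin a) (Fin a) k := Matrix.of fun i j =>
    if (i : ℕ) ≤ b + (j : ℕ) ∧ b + (j : ℕ) ≤ (i : ℕ) + b then f.coeff (i - j) else 0 with hDk
  set Sm : Matrix (Fin (a + b)) (Fin (a + b)) (k[X]) := Matrix.of fun i j =>
    if (i : ℕ) < b then
      if (i : ℕ) ≤ (j : ℕ) ∧ (j : ℕ) ≤ (i : ℕ) + a then
        p.coeff (a + i - j) else 0
    else
      if (i : ℕ) - b ≤ (j : ℕ) ∧ (j : ℕ) ≤ (i : ℕ) - b + b then
        q.coeff (b + ((i : ℕ) - b) - (j : ℕ)) else 0 with hSm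
  have hres : _root_.resultant p q = Sm.det := rfl
  set e : (Fin b ⊕ Fin a) ≃ Fin (a + b) :=
    finSumFinEquiv.trans (finCongr (Nat.add_comm b a)) with he
  have hel : ∀ i : Fin b, ((e (Sum.inl i) : Fin (a + b)) : ℕ) = (i : ℕ) := by
    intro i; simp [he, finSumFinEquiv_apply_left]
  have her : ∀ i : Fin a, ((e (Sum.inr i) : Fin (a + b)) : ℕ) = b + (i : ℕ) := by
    intro i; simp [he, finSumFinEquiv_apply_right, Nat.add_comm]
  have hblocks : Sm.submatrix e e
      = Matrix.fromBlocks (A.map C) (B.map C) (Cc.map C)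
          (Dk.map C - Matrix.diagonal fun _ => (X : k[X])) := by
    funext i j
    cases i with
    | inl i =>
      cases j with
      | inl j =>
        simp only [Matrix.submatrix_apply, hSm, Matrix.of_apply, hel, Matrix.fromBlocks_apply₁₁,
          Matrix.map_apply, hA]
        rw [if_pos i.isLt, apply_ite C, map_zero]
        simp only [hp, coeff_map]
      | inr j =>
        simp only [Matrix.submatrix_apply, hSm, Matrix.of_apply, hel, her,
          Matrix.fromBlocks_apply₁₂, Matrix.map_apply, hB]
        rw [if_pos i.isLt, apply_ite C, map_zero]
        simp only [hp, coeff_map]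
    | inr i =>
      cases j with
      | inl j =>
        simp only [Matrix.submatrix_apply, hSm, Matrix.of_apply, hel, her,
          Matrix.fromBlocks_apply₂₁, Matrix.map_apply, hCc]
        rw [if_neg (by omega)]
        have h1 : b + (i : ℕ) - b = (i : ℕ) := by omega
        rw [h1, apply_ite C, map_zero]
        by_cases hgd : (i : ℕ) ≤ (j : ℕ) ∧ (j : ℕ) ≤ (i : ℕ) + b
        · rw [if_pos hgd, if_pos hgd, hqcoeff, if_neg (by omega), sub_zero]
        · rw [if_neg hgd, if_neg hgd]
      | inr j =>
        simp only [Matrix.submatrix_apply, hSm, Matrix.of_apply, her,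
          Matrix.fromBlocks_apply₂₂, Matrix.sub_apply, Matrix.map_apply, hDk]
        rw [if_neg (by omega)]
        have h1 : b + (i : ℕ) - b = (i : ℕ) := by omega
        rw [h1, apply_ite C, map_zero]
        by_cases hij : i = j
        · subst hij
          rw [if_pos (by omega), if_pos (by omega), hqcoeff]
          have h2 : b + (i : ℕ) - (b + (i : ℕ)) = 0 := by omega
          have h3 : (i : ℕ) - (i : ℕ) = 0 := by omega
          rw [h2, h3, if_pos rfl, Matrix.diagonal_apply_eq]
        · rw [Matrix.diagonal_apply_ne _ hij, sub_zero]
          by_cases hgd : (i : ℕ) ≤ b + (j : ℕ) ∧ b + (j : ℕ) ≤ (i : ℕ) + b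
          · rw [if_pos hgd, if_pos hgd, hqcoeff]
            have h4 : b + (i : ℕ) - (b + (j : ℕ)) = (i : ℕ) - (j : ℕ) := by omega
            have h5 : ¬ ((i : ℕ) - (j : ℕ) = 0) := by
              have h6 : (i : ℕ) ≠ (j : ℕ) := fun hc => hij (Fin.ext hc)
              omega
            rw [h4, if_neg h5, sub_zero]
          · rw [if_neg hgd, if_neg hgd]
  have hAtri : A.BlockTriangular id := by
    intro i j hij
    simp only [id] at hij
    simp only [hA, Matrix.of_apply]
    rw [if_neg (by omega)]
  have hAdiag : ∀ i, A i i = 1 := by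
    intro i
    simp only [hA, Matrix.of_apply]
    rw [if_pos (by omega)]
    have h7 : a + (i : ℕ) - (i : ℕ) = a := by omega
    rw [h7, ha]
    exact hg.coeff_natDegree
  have hAdet : A.det = 1 := by
    rw [Matrix.det_of_upperTriangular hAtri]
    simp [hAdiag]
  haveI : Invertible A := A.invertibleOfIsUnitDet (by rw [hAdet]; exact isUnit_one)
  haveI : Invertible (A.map C) := by
    have := Invertible.map ((C : k →+* k[X]).mapMatrix) A
    rwa [RingHom.mapMatrix_apply] at this
  set Q : Matrix (Fin a) (Fin a) k := Dk - Cc * ⅟A * B with hQ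
  refine ⟨Q, ?_⟩
  have hinv : ⅟(A.map (C : k → k[X])) = (⅟A).map C := by
    refine invOf_eq_right_inv ?_
    rw [← Matrix.map_mul, mul_invOf_self, Matrix.map_one _ (map_zero C) (map_one C)]
  have hdetA : (A.map (C : k → k[X])).det = 1 := by
    rw [← RingHom.mapMatrix_apply, ← RingHom.map_det, hAdet, map_one]
  calc _root_.resultant p q = Sm.det := hres
    _ = (Sm.submatrix e e).det := (Matrix.det_submatrix_equiv_self e Sm).symm
    _ = (Matrix.fromBlocks (A.map C) (B.map C) (Cc.map C)
          (Dk.map C - Matrix.diagonal fun _ => (X : k[X]))).det := by rw [hblocks]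
    _ = (A.map C).det * ((Dk.map C - Matrix.diagonal fun _ => (X : k[X]))
          - Cc.map C * ⅟(A.map C) * B.map C).det := by rw [Matrix.det_fromBlocks₁₁]
    _ = (Q.map C - Matrix.diagonal fun _ => (X : k[X])).det := by
        rw [hdetA, one_mul, hinv, ← Matrix.map_mul, ← Matrix.map_mul]
        congr 1
        rw [hQ, Matrix.map_sub (C : k → k[X]) (fun x y => map_sub C x y)]
        exact sub_right_comm _ _ _
    _ = (-1 : k[X]) ^ a * Q.charpoly := by
        rw [neg_charmatrix Q, Matrix.det_neg, Fintype.card_fin]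
        rfl

/-- If `f, g ∈ k[Y]` are monic and `h = (-1)^(deg g) · Res_Y(g, f - T)` is irreducible
in `k[T]`, then `g` is irreducible in `k[Y]`. -/
theorem irreducible_of_resultant_irreducible {k : Type*} [Field k]
    (f g : k[X]) (hf : f.Monic) (hg : g.Monic) (hdeg : 0 < g.natDegree)
    (hh : Irreducible ((-1 : k[X]) ^ g.natDegree * _root_.resultant (g.map C) (f.map C - C X))) :
    Irreducible g := by
  set n := g.natDegree with hn
  set res := _root_.resultant (g.map C) (f.map C - C X) with hres
  set h : k[X] := (-1 : k[X]) ^ n * res with hhdef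
  have ha : (g.map (C : k →+* k[X])).natDegree = n := hg.natDegree_map C
  obtain ⟨Q, hQ⟩ := resultant_eq_charpoly f g hg
  have hpow : ((-1 : k[X])) ^ ((g.map (C : k →+* k[X])).natDegree) = (-1 : k[X]) ^ n := by
    rw [ha]
  have hhQ : h = Q.charpoly := by
    rw [hhdef, hres, hQ, ← mul_assoc, hpow, ← mul_pow, neg_mul_neg, one_mul, one_pow, one_mul]
  have hmonic : h.Monic := by rw [hhQ]; exact Q.charpoly_monic
  have hdegh : h.natDegree = n := by
    rw [hhQ, Q.charpoly_natDegree_eq_dim, Fintype.card_fin, ha]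
  -- divisibility g ∣ aeval f h
  have hNpos : 0 < (g.map (C : k →+* k[X])).natDegree + (f.map C - C X).natDegree := by
    rw [ha]; omega
  have hspan := resultant_mem_span (g.map C) (f.map C - C X) hNpos
  set ψ : (k[X])[X] →+* k[X] := eval₂RingHom (aeval f : k[X] →ₐ[k] k[X]).toRingHom X with hψ
  have h1 : ψ (g.map C) = g := by
    rw [hψ]
    show eval₂ _ X (g.map C) = g
    rw [eval₂_map]
    have : ((aeval f : k[X] →ₐ[k] k[X]).toRingHom.comp (C : k →+* k[X])) = (C : k →+* k[X]) := by
      ext x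
      simp [aeval_C]
    rw [this, eval₂_C_X]
  have h2 : ψ (f.map C - C X) = 0 := by
    rw [map_sub]
    have hfc : ψ (f.map C) = f := by
      rw [hψ]
      show eval₂ _ X (f.map C) = f
      rw [eval₂_map]
      have : ((aeval f : k[X] →ₐ[k] k[X]).toRingHom.comp (C : k →+* k[X])) = (C : k →+* k[X]) := by
        ext x
        simp [aeval_C]
      rw [this, eval₂_C_X]
    have hcx : ψ (C X) = f := by
      rw [hψ]
      show eval₂ _ X (C X) = f
      rw [eval₂_C]
      simp
    rw [hfc, hcx, sub_self]
  have h3 : ψ (C res) = aeval f res := by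
    rw [hψ]
    show eval₂ _ X (C res) = _
    rw [eval₂_C]
    rfl
  have hmem : ψ (C res) ∈ Ideal.map ψ (Ideal.span {g.map C, f.map C - C X}) :=
    Ideal.mem_map_of_mem _ hspan
  rw [Ideal.map_span, Set.image_insert_eq, Set.image_singleton, h1, h2, h3] at hmem
  have hmem2 : aeval f res ∈ Ideal.span ({g} : Set k[X]) := by
    have hz : Ideal.span ({0} : Set k[X]) = ⊥ := by simp
    rw [Ideal.span_insert, hz, sup_bot_eq] at hmem
    exact hmem
  have hdvdres : g ∣ aeval f res := Ideal.mem_span_singleton.mp hmem2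
  have hdvd : g ∣ aeval f h := by
    rw [hhdef, map_mul]
    exact Dvd.dvd.mul_left hdvdres _
  -- field theory
  obtain ⟨pp, hpm, hpirr, hpdvd⟩ :=
    g.exists_monic_irreducible_factor (not_isUnit_of_natDegree_pos g hdeg)
  haveI : Fact (Irreducible pp) := ⟨hpirr⟩
  set K := AdjoinRoot pp with hK
  haveI : Module.Finite k K := (AdjoinRoot.powerBasis hpm.ne_zero).finite
  set β : K := AdjoinRoot.root pp with hβ
  have hgβ : aeval β g = 0 := by
    rw [AdjoinRoot.aeval_eq, AdjoinRoot.mk_eq_zero]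
    exact hpdvd
  have hβh : aeval (aeval β f) h = 0 := by
    obtain ⟨c, hc⟩ := hdvd
    rw [aeval_algHom_apply (aeval β : k[X] →ₐ[k] K) f h, hc, map_mul, hgβ, zero_mul]
  have hmin : h = minpoly k (aeval β f) :=
    minpoly.eq_of_irreducible_of_monic hh hβh hmonic
  have hle : h.natDegree ≤ pp.natDegree := by
    have h4 := minpoly.natDegree_le (A := k) (aeval β f)
    rw [← hmin, (AdjoinRoot.powerBasis hpm.ne_zero).finrank,
      AdjoinRoot.powerBasis_dim] at h4
    exact h4
  have hppdeg : pp.natDegree = n := le_antisymm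
    (natDegree_le_of_dvd hpdvd hg.ne_zero) (hdegh ▸ hle)
  obtain ⟨c, hc⟩ := hpdvd
  have hcne : c ≠ 0 := by
    rintro rfl
    rw [mul_zero] at hc
    exact hg.ne_zero hc
  have hcdeg : c.natDegree = 0 := by
    have h5 : g.natDegree = pp.natDegree + c.natDegree := by
      rw [hc]; exact natDegree_mul hpm.ne_zero hcne
    omega
  have hcm : c.Monic := by
    have : g.leadingCoeff = pp.leadingCoeff * c.leadingCoeff := by rw [hc, leadingCoeff_mul]
    rw [hg.leadingCoeff, hpm.leadingCoeff, one_mul] at this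
    exact this.symm
  have hc1 : c = 1 := (hcm.natDegree_eq_zero).mp hcdeg
  rw [hc1, mul_one] at hc
  rw [hc]
  exact hpirr
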